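/- Let A = diag(A₁, A₂) with σ(A₁) in the open right half-plane and σ(A₂) in the open left half-plane, C ∈ ℂ^{m×n}, J = j_{pq}, P Hermitian with A* P + P A + C* J C = 0, and X Hermitian with X A* + A X + X C* J C X = 0, XPX = X, PXP = P. Set F(λ) = C(A − λ I)⁻¹ and W(λ) = I_m + C(A − λ I)⁻¹ X C* J. Then W(λ)⁻¹ F(λ) X = −C X (A* + λ I)⁻¹ for all λ ∉ σ(A) ∪ σ(−A*). -/

import Mathlib

open Matrix

/-- If `E` is invertible and `S` is an `E`-invariant subspace, then `E *ᵥ v ∈ S`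
implies `v ∈ S`. -/
lemma aux_inv_stable {n : Type*} [Fintype n] [DecidableEq n]
    (E : Matrix n n ℂ) (hE : IsUnit E.det)
    (S : Submodule ℂ (n → ℂ)) (hS : ∀ v ∈ S, E *ᵥ v ∈ S)
    (v : n → ℂ) (hv : E *ᵥ v ∈ S) : v ∈ S := by
  have hinj : Function.Injective E.mulVecLin := by
    intro a b hab
    have : E⁻¹ *ᵥ (E *ᵥ a) = E⁻¹ *ᵥ (E *ᵥ b) := by
      simpa [Matrix.mulVecLin_apply] using congrArg (E⁻¹ *ᵥ ·) hab
    simpa [Matrix.mulVec_mulVec, Matrix.nonsing_inv_mul E hE] using this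
  let f : S →ₗ[ℂ] S := (E.mulVecLin.restrict (fun x hx => hS x hx))
  have hfinj : Function.Injective f := by
    intro a b hab
    apply Subtype.ext
    exact hinj (congrArg Subtype.val hab)
  have hfsurj : Function.Surjective f := LinearMap.surjective_of_injective hfinj
  obtain ⟨x, hx⟩ := hfsurj ⟨E *ᵥ v, hv⟩
  have hEx : E *ᵥ (x : n → ℂ) = E *ᵥ v := by
    exact congrArg Subtype.val hx
  have : (x : n → ℂ) = v := hinj (by simpa [Matrix.mulVecLin_apply] using hEx)
  exact this ▸ x.2

/-- Half-plane setting: with `A = diag(A₁, A₂)`, `σ(A₁)` in the open right half-plane,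
`σ(A₂)` in the open left half-plane, `P` a Hermitian solution of `Aᴴ P + P A + Cᴴ J C = 0`,
`X` Hermitian with `X Aᴴ + A X + X Cᴴ J C X = 0`, `XPX = X`, `PXP = P`,
`F(λ) = C(A - λ)⁻¹` and `W(λ) = I + C(A - λ)⁻¹ X Cᴴ J`, one has
`W(λ)⁻¹ F(λ) X = -C X (Aᴴ + λ)⁻¹` for all `λ ∉ σ(A) ∪ σ(-Aᴴ)`. -/
theorem stmt18 {n₁ n₂ p q : ℕ}
    (A₁ : Matrix (Fin n₁) (Fin n₁) ℂ) (A₂ : Matrix (Fin n₂) (Fin n₂) ℂ)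
    (hA₁ : ∀ z ∈ spectrum ℂ A₁, 0 < z.re) (hA₂ : ∀ z ∈ spectrum ℂ A₂, z.re < 0)
    (A : Matrix (Fin n₁ ⊕ Fin n₂) (Fin n₁ ⊕ Fin n₂) ℂ)
    (hA : A = Matrix.fromBlocks A₁ 0 0 A₂)
    (C : Matrix (Fin p ⊕ Fin q) (Fin n₁ ⊕ Fin n₂) ℂ)
    (J : Matrix (Fin p ⊕ Fin q) (Fin p ⊕ Fin q) ℂ)
    (hJ : J = Matrix.fromBlocks (1 : Matrix (Fin p) (Fin p) ℂ) 0 0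
      (-1 : Matrix (Fin q) (Fin q) ℂ))
    (P X : Matrix (Fin n₁ ⊕ Fin n₂) (Fin n₁ ⊕ Fin n₂) ℂ)
    (hP : P.IsHermitian) (hX : X.IsHermitian)
    (hLyap : Aᴴ * P + P * A + Cᴴ * J * C = 0)
    (hRic : X * Aᴴ + A * X + X * Cᴴ * J * C * X = 0)
    (h1 : X * P * X = X) (h2 : P * X * P = P)
    (lam : ℂ) (hl1 : lam ∉ spectrum ℂ A) (hl2 : lam ∉ spectrum ℂ (-(Aᴴ))) :
    (1 + C * (A - lam • 1)⁻¹ * X * Cᴴ * J)⁻¹ * (C * (A - lam • 1)⁻¹) * X =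
      -(C * X * (Aᴴ + lam • 1)⁻¹) := by
  set D : Matrix (Fin n₁ ⊕ Fin n₂) (Fin n₁ ⊕ Fin n₂) ℂ := A - lam • 1 with hD
  set B : Matrix (Fin n₁ ⊕ Fin n₂) (Fin n₁ ⊕ Fin n₂) ℂ := Aᴴ + lam • 1 with hB
  set M : Matrix (Fin n₁ ⊕ Fin n₂) (Fin n₁ ⊕ Fin n₂) ℂ :=
    A + X * Cᴴ * J * C - lam • 1 with hM
  -- invertibility of D and B
  rw [spectrum.notMem_iff] at hl1 hl2
  rw [Algebra.algebraMap_eq_smul_one] at hl1 hl2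
  have hDu : IsUnit D := by rw [hD]; simpa [neg_sub] using hl1.neg
  have hBu : IsUnit B := by rw [hB]; simpa [sub_neg_eq_add, add_comm] using hl2
  have hDd : IsUnit D.det := (Matrix.isUnit_iff_isUnit_det D).mp hDu
  have hBd : IsUnit B.det := (Matrix.isUnit_iff_isUnit_det B).mp hBu
  -- basic identities from the Riccati and Lyapunov equations
  have r1 : X * Cᴴ * J * C * X = -(X * Aᴴ + A * X) :=
    eq_neg_of_add_eq_zero_right hRic
  have hL2 : Cᴴ * J * C = -(Aᴴ * P + P * A) :=
    eq_neg_of_add_eq_zero_right hLyap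
  have hXL2 : X * Cᴴ * J * C = -(X * Aᴴ * P) - X * P * A := by
    calc X * Cᴴ * J * C = X * (Cᴴ * J * C) := by simp only [Matrix.mul_assoc]
    _ = -(X * Aᴴ * P) - X * P * A := by
        rw [hL2]; simp only [Matrix.mul_add, Matrix.mul_neg, ← Matrix.mul_assoc]; abel
  have i1 : X * B = -(M * X) := by
    simp only [hB, hM, Matrix.mul_add, Matrix.add_mul, Matrix.mul_sub, Matrix.sub_mul,
      Matrix.neg_mul, Matrix.mul_neg, Matrix.smul_mul, Matrix.mul_smul, Matrix.mul_one,
      Matrix.one_mul, ← Matrix.mul_assoc, h1, r1]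
    abel
  have i5 : X * Cᴴ * J * C = M - D := by
    rw [hM, hD]; abel
  have i4 : X * Cᴴ * J * C * X = -(X * B) - D * X := by
    simp only [hB, hD, Matrix.mul_add, Matrix.add_mul, Matrix.mul_sub, Matrix.sub_mul,
      Matrix.neg_mul, Matrix.mul_neg, Matrix.smul_mul, Matrix.mul_smul, Matrix.mul_one,
      Matrix.one_mul, ← Matrix.mul_assoc, h1, r1]
    abel
  have i3 : M = D - X * Aᴴ * P - X * P * A := by
    rw [hM, hD, hXL2]; abel
  have i2 : M * (X * P) = (X * P) * M := by
    simp only [hM, Matrix.mul_add, Matrix.add_mul, Matrix.mul_sub, Matrix.sub_mul,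
      Matrix.neg_mul, Matrix.mul_neg, Matrix.smul_mul, Matrix.mul_smul, Matrix.mul_one,
      Matrix.one_mul, ← Matrix.mul_assoc, h1, r1]
    simp only [hXL2, Matrix.sub_mul, Matrix.neg_mul, Matrix.add_mul, Matrix.mul_add,
      Matrix.mul_neg, ← Matrix.mul_assoc, h1]
    abel
  have i6 : D * X = X * (-Aᴴ - Cᴴ * J * C * X - lam • 1) := by
    simp only [hD, Matrix.mul_add, Matrix.add_mul, Matrix.mul_sub, Matrix.sub_mul,
      Matrix.neg_mul, Matrix.mul_neg, Matrix.smul_mul, Matrix.mul_smul, Matrix.mul_one,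
      Matrix.one_mul, ← Matrix.mul_assoc, h1, r1]
    abel
  -- M is invertible
  have hMd : IsUnit M.det := by
    rw [isUnit_iff_ne_zero]
    intro hdet
    obtain ⟨v, hv0, hv⟩ := (Matrix.exists_mulVec_eq_zero_iff).mpr hdet
    -- step 1 : X *ᵥ (P *ᵥ v) = 0
    have stMQ : M *ᵥ (X *ᵥ (P *ᵥ v)) = 0 := by
      have : (M * (X * P)) *ᵥ v = ((X * P) * M) *ᵥ v := by rw [i2]
      simpa [← Matrix.mulVec_mulVec, hv] using this
    have stXB : X *ᵥ (B *ᵥ (P *ᵥ v)) = 0 := by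
      have : (X * B) *ᵥ (P *ᵥ v) = (-(M * X)) *ᵥ (P *ᵥ v) := by rw [i1]
      simpa [← Matrix.mulVec_mulVec] using this.trans (by simp [Matrix.neg_mulVec,
        ← Matrix.mulVec_mulVec, stMQ])
    have kerinv : ∀ w ∈ LinearMap.ker X.mulVecLin, B *ᵥ w ∈ LinearMap.ker X.mulVecLin := by
      intro w hw
      have hw' : X *ᵥ w = 0 := by simpa [Matrix.mulVecLin_apply] using hw
      have : X *ᵥ (B *ᵥ w) = (-(M * X)) *ᵥ w := by
        rw [Matrix.mulVec_mulVec, i1]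
      simp only [LinearMap.mem_ker, Matrix.mulVecLin_apply, this, Matrix.neg_mulVec,
        ← Matrix.mulVec_mulVec, hw', Matrix.mulVec_zero, neg_zero]
    have st1 : X *ᵥ (P *ᵥ v) = 0 := by
      have := aux_inv_stable B hBd (LinearMap.ker X.mulVecLin) kerinv (P *ᵥ v)
        (by simpa [LinearMap.mem_ker, Matrix.mulVecLin_apply] using stXB)
      simpa [LinearMap.mem_ker, Matrix.mulVecLin_apply] using this
    -- step 2 : D *ᵥ v ∈ range X
    have stXA : (X * Aᴴ) *ᵥ (P *ᵥ v) = 0 := by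
      have hXA : X * Aᴴ = -(M * X) - lam • X := by
        have : X * B = X * Aᴴ + lam • X := by
          rw [hB]; simp [Matrix.mul_add, Matrix.mul_smul]
        rw [← i1, this]; abel
      rw [hXA]
      simp [Matrix.sub_mulVec, Matrix.neg_mulVec, ← Matrix.mulVec_mulVec, st1,
        Matrix.smul_mulVec]
    have stD : D *ᵥ v = X *ᵥ ((P * A) *ᵥ v) := by
      have hMv : M *ᵥ v = 0 := hv
      rw [i3] at hMv
      have : D *ᵥ v - (X * Aᴴ * P) *ᵥ v - (X * P * A) *ᵥ v = 0 := by
        simpa [Matrix.sub_mulVec] using hMv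
      have h4 : (X * Aᴴ * P) *ᵥ v = 0 := by
        rw [← Matrix.mulVec_mulVec]; exact stXA
      have h5 : (X * P * A) *ᵥ v = X *ᵥ ((P * A) *ᵥ v) := by
        rw [Matrix.mulVec_mulVec, Matrix.mul_assoc]
      rw [h4, h5] at this
      rw [sub_zero, sub_eq_zero] at this
      exact this
    have rnginv : ∀ w ∈ LinearMap.range X.mulVecLin,
        D *ᵥ w ∈ LinearMap.range X.mulVecLin := by
      intro w hw
      obtain ⟨u, hu⟩ := hw
      refine ⟨(-Aᴴ - Cᴴ * J * C * X - lam • 1) *ᵥ u, ?_⟩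
      simp only [Matrix.mulVecLin_apply] at hu ⊢
      rw [Matrix.mulVec_mulVec, ← i6, ← hu, Matrix.mulVec_mulVec]
    have st2 : v ∈ LinearMap.range X.mulVecLin := by
      apply aux_inv_stable D hDd _ rnginv
      exact ⟨(P * A) *ᵥ v, by simpa [Matrix.mulVecLin_apply] using stD.symm⟩
    obtain ⟨w, hw⟩ := st2
    simp only [Matrix.mulVecLin_apply] at hw
    -- conclude v = 0
    have : v = 0 := by
      have : X *ᵥ (P *ᵥ v) = v := by
        rw [← hw, Matrix.mulVec_mulVec, Matrix.mulVec_mulVec, h1]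
      rw [st1] at this; exact this.symm
    exact hv0 this
  have hMu : IsUnit M := (Matrix.isUnit_iff_isUnit_det M).mpr hMd
  -- the explicit inverse of W
  have hDD : D * D⁻¹ = 1 := Matrix.mul_nonsing_inv D hDd
  have hDD' : D⁻¹ * D = 1 := Matrix.nonsing_inv_mul D hDd
  have hBB : B * B⁻¹ = 1 := Matrix.mul_nonsing_inv B hBd
  have hMM : M * M⁻¹ = 1 := Matrix.mul_nonsing_inv M hMd
  have hMM' : M⁻¹ * M = 1 := Matrix.nonsing_inv_mul M hMd
  set W : Matrix (Fin p ⊕ Fin q) (Fin p ⊕ Fin q) ℂ := 1 + C * D⁻¹ * X * Cᴴ * J with hW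
  set V : Matrix (Fin p ⊕ Fin q) (Fin p ⊕ Fin q) ℂ := 1 - C * M⁻¹ * X * Cᴴ * J with hV
  have key : D⁻¹ * (X * Cᴴ * J * C) * M⁻¹ = D⁻¹ - M⁻¹ := by
    rw [i5, Matrix.mul_sub, Matrix.sub_mul]
    rw [Matrix.mul_assoc D⁻¹ M M⁻¹, hMM, Matrix.mul_one, hDD', Matrix.one_mul]
  have hWV : W * V = 1 := by
    rw [hW, hV]
    have expand : (1 + C * D⁻¹ * X * Cᴴ * J) * (1 - C * M⁻¹ * X * Cᴴ * J) =
        1 + C * D⁻¹ * X * Cᴴ * J - C * M⁻¹ * X * Cᴴ * J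
          - C * (D⁻¹ * (X * Cᴴ * J * C) * M⁻¹) * X * Cᴴ * J := by
      simp only [Matrix.mul_add, Matrix.add_mul, Matrix.mul_sub, Matrix.sub_mul,
        Matrix.mul_one, Matrix.one_mul, ← Matrix.mul_assoc]
      abel
    rw [expand, key]
    simp only [Matrix.mul_sub, Matrix.sub_mul, ← Matrix.mul_assoc]
    abel
  have hWd : IsUnit W.det := by
    have : W.det * V.det = 1 := by rw [← Matrix.det_mul, hWV, Matrix.det_one]
    exact IsUnit.of_mul_eq_one _ this
  -- key computation : W * (-(C * X * B⁻¹)) = C * D⁻¹ * X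
  have key2 : W * (-(C * X * B⁻¹)) = C * D⁻¹ * X := by
    have hXCJCX : X * Cᴴ * J * C * X = -(X * B) - D * X := i4
    have expand : W * (-(C * X * B⁻¹)) =
        -(C * X * B⁻¹) - C * D⁻¹ * (X * Cᴴ * J * C * X) * B⁻¹ := by
      rw [hW]
      simp only [Matrix.mul_add, Matrix.add_mul, Matrix.mul_neg, Matrix.neg_mul,
        Matrix.mul_one, Matrix.one_mul, ← Matrix.mul_assoc]
      abel
    have ha : C * D⁻¹ * (X * B) * B⁻¹ = C * D⁻¹ * X := by
      rw [Matrix.mul_assoc (C * D⁻¹) (X * B) B⁻¹, Matrix.mul_assoc X B B⁻¹, hBB,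
        Matrix.mul_one]
    have hb : C * D⁻¹ * (D * X) * B⁻¹ = C * X * B⁻¹ := by
      rw [← Matrix.mul_assoc (C * D⁻¹) D X, Matrix.mul_assoc C D⁻¹ D, hDD',
        Matrix.mul_one]
    have m1 : C * D⁻¹ * (X * Cᴴ * J * C * X) * B⁻¹ = -(C * D⁻¹ * X) - C * X * B⁻¹ := by
      rw [hXCJCX]
      simp only [Matrix.mul_sub, Matrix.sub_mul, Matrix.mul_neg, Matrix.neg_mul]
      rw [ha, hb]
    rw [expand, m1]
    abel
  -- final assembly
  have : W⁻¹ * (C * D⁻¹) * X = W⁻¹ * (W * (-(C * X * B⁻¹))) := by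
    rw [key2, Matrix.mul_assoc]
  rw [this, ← Matrix.mul_assoc, Matrix.nonsing_inv_mul W hWd, Matrix.one_mul]
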